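/- Let σ₁, σ₂, c : ℝ → ℝ with σ₁, σ₂ differentiable, and suppose σ₁'(t) = σ₁(t) σ₂(t)² c(t) and σ₂'(t) = σ₂(t) σ₁(t)² c(t) for all t. Then σ₁(t)² − σ₂(t)² is constant in t; and, setting C := σ₂(0)² − σ₁(0)², the first equation closes to σ₁'(t) = σ₁(t) ( σ₁(t)² + C ) c(t) for all t. -/

import Mathlib

/-- **Scalar consequence of the aligned singular-value dynamics.**
If `σ₁' = σ₁ σ₂² c` and `σ₂' = σ₂ σ₁² c`, then `σ₁² − σ₂²` is constant in
time, and with `C = σ₂(0)² − σ₁(0)²` the first equation closes to the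
autonomous law `σ₁' = σ₁ (σ₁² + C) c`. -/
theorem paired_singular_value_growth
    (σ₁ σ₂ c : ℝ → ℝ)
    (h₁ : ∀ t, HasDerivAt σ₁ (σ₁ t * σ₂ t ^ 2 * c t) t)
    (h₂ : ∀ t, HasDerivAt σ₂ (σ₂ t * σ₁ t ^ 2 * c t) t) :
    (∀ t, σ₁ t ^ 2 - σ₂ t ^ 2 = σ₁ 0 ^ 2 - σ₂ 0 ^ 2) ∧
    (∀ t, HasDerivAt σ₁
      (σ₁ t * (σ₁ t ^ 2 + (σ₂ 0 ^ 2 - σ₁ 0 ^ 2)) * c t) t) := by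
  have hf : ∀ t, HasDerivAt (fun t => σ₁ t ^ 2 - σ₂ t ^ 2) 0 t := by
    intro t
    have := ((h₁ t).pow 2).sub ((h₂ t).pow 2)
    refine this.congr_deriv ?_
    norm_num
    ring
  have hconst : ∀ t, σ₁ t ^ 2 - σ₂ t ^ 2 = σ₁ 0 ^ 2 - σ₂ 0 ^ 2 := by
    intro t
    have := is_const_of_deriv_eq_zero (f := fun t => σ₁ t ^ 2 - σ₂ t ^ 2)
      (fun x => (hf x).differentiableAt) (fun x => (hf x).deriv) t 0
    simpa using this
  refine ⟨hconst, fun t => ?_⟩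
  have h := hconst t
  have : σ₂ t ^ 2 = σ₁ t ^ 2 + (σ₂ 0 ^ 2 - σ₁ 0 ^ 2) := by linarith
  have := h₁ t
  rw [‹σ₂ t ^ 2 = _›] at this
  exact this
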